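/- arXiv:1304.7898 — 2 statements merged into one kernel-verified Lean document; each statement's English description precedes it below -/
import Mathlib

section
/- The map F(z₁,…,z_n) = (z₁/z_{k+1}, …, z_k/z_{k+1}, z_{k+1}/z_{k+2}, …, z_{n−1}/z_n, z_n) is a biholomorphism from the generalized Hartogs triangle H^n_k = {z ∈ ℂ^n : |(z₁,…,z_k)| < |z_{k+1}| < ⋯ < |z_n| < 1} onto the product B^k × (D*)^{n−k}, with inverse G(w) = (w₁·w_{k+1}⋯w_n, …, w_k·w_{k+1}⋯w_n, w_{k+1}⋯w_n, …, w_{n−1}w_n, w_n). -/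
open MeasureTheory

/-- The generalized Hartogs triangle
H^n_k = {z ∈ ℂ^n : |(z₁,…,z_k)| < |z_{k+1}| < ⋯ < |z_n| < 1} (0-based indices). -/
def hartogsTriangle (n k : ℕ) : Set (Fin n → ℂ) :=
  {z | (∀ hkn : k < n,
          Real.sqrt (∑ i : Fin n, if (i : ℕ) < k then ‖z i‖ ^ 2 else 0) < ‖z ⟨k, hkn⟩‖) ∧
       (∀ j : Fin n, k ≤ (j : ℕ) → ∀ hj : (j : ℕ) + 1 < n, ‖z j‖ < ‖z ⟨(j : ℕ) + 1, hj⟩‖) ∧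
       (∀ hn : 0 < n, ‖z ⟨n - 1, Nat.sub_lt hn one_pos⟩‖ < 1)}

/-- The product domain B^k × (D*)^{n-k} inside ℂ^n (0-based indices). -/
def ballTimesPuncturedDisks (n k : ℕ) : Set (Fin n → ℂ) :=
  {w | Real.sqrt (∑ i : Fin n, if (i : ℕ) < k then ‖w i‖ ^ 2 else 0) < 1 ∧
       ∀ j : Fin n, k ≤ (j : ℕ) → (w j ≠ 0 ∧ ‖w j‖ < 1)}

/-- F(z) = (z₁/z_{k+1},…,z_k/z_{k+1}, z_{k+1}/z_{k+2},…,z_{n-1}/z_n, z_n). -/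
noncomputable def hartogsF (n k : ℕ) (hkn : k < n) (z : Fin n → ℂ) : Fin n → ℂ := fun i =>
  if h : (i : ℕ) < k then z i / z ⟨k, hkn⟩
  else if h' : (i : ℕ) + 1 < n then z i / z ⟨(i : ℕ) + 1, h'⟩
  else z i

/-- G(w) = (w₁·w_{k+1}⋯w_n, …, w_k·w_{k+1}⋯w_n, w_{k+1}⋯w_n, …, w_{n-1}w_n, w_n). -/
def hartogsG (n k : ℕ) (w : Fin n → ℂ) : Fin n → ℂ := fun i =>
  (if (i : ℕ) < k then w i else 1) *
    ∏ s : Fin n, (if max (i : ℕ) k ≤ (s : ℕ) then w s else 1)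

namespace HartogsAux

/- partial product ∏_{s ≥ m} w s -/
def P (n m : ℕ) (w : Fin n → ℂ) : ℂ := ∏ s : Fin n, (if m ≤ (s : ℕ) then w s else 1)

lemma P_top {n m : ℕ} (h : n ≤ m) (w : Fin n → ℂ) : P n m w = 1 := by
  unfold P
  apply Finset.prod_eq_one
  intro s _
  rw [if_neg (by have := s.isLt; omega)]

lemma P_split {n m : ℕ} (h : m < n) (w : Fin n → ℂ) :
    P n m w = w ⟨m, h⟩ * P n (m + 1) w := by
  unfold P
  rw [← Finset.mul_prod_erase Finset.univ _ (Finset.mem_univ (⟨m, h⟩ : Fin n))]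
  congr 1
  · simp
  · rw [← Finset.prod_erase (a := (⟨m, h⟩ : Fin n)) Finset.univ (by simp)]
    apply Finset.prod_congr rfl
    intro s hs
    have hsm : (s : ℕ) ≠ m := by
      intro hc
      exact (Finset.mem_erase.mp hs).1 (Fin.ext hc)
    by_cases h1 : m + 1 ≤ (s : ℕ)
    · rw [if_pos h1, if_pos (by omega)]
    · rw [if_neg h1, if_neg (by omega)]

lemma P_ne_zero {n k m : ℕ} {w : Fin n → ℂ} (hw : ∀ j : Fin n, k ≤ (j : ℕ) → w j ≠ 0)
    (hm : k ≤ m) : P n m w ≠ 0 := by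
  unfold P
  rw [Finset.prod_ne_zero_iff]
  intro s _
  by_cases h : m ≤ (s : ℕ)
  · rw [if_pos h]; exact hw s (le_trans hm h)
  · rw [if_neg h]; exact one_ne_zero

lemma F_lo {n k : ℕ} (hkn : k < n) (z : Fin n → ℂ) (i : Fin n) (h : (i : ℕ) < k) :
    hartogsF n k hkn z i = z i / z ⟨k, hkn⟩ := dif_pos h

lemma F_mid {n k : ℕ} (hkn : k < n) (z : Fin n → ℂ) (i : Fin n) (h : k ≤ (i : ℕ))
    (h' : (i : ℕ) + 1 < n) : hartogsF n k hkn z i = z i / z ⟨(i : ℕ) + 1, h'⟩ := by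
  unfold hartogsF
  rw [dif_neg (by omega), dif_pos h']

lemma F_hi {n k : ℕ} (hkn : k < n) (z : Fin n → ℂ) (i : Fin n) (h : k ≤ (i : ℕ))
    (h' : ¬ ((i : ℕ) + 1 < n)) : hartogsF n k hkn z i = z i := by
  unfold hartogsF
  rw [dif_neg (by omega), dif_neg h']

lemma G_eq {n k : ℕ} (w : Fin n → ℂ) (i : Fin n) :
    hartogsG n k w i = (if (i : ℕ) < k then w i else 1) * P n (max (i : ℕ) k) w := rfl

lemma G_lo {n k : ℕ} (w : Fin n → ℂ) (i : Fin n) (h : (i : ℕ) < k) :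
    hartogsG n k w i = w i * P n k w := by
  rw [G_eq, if_pos h, max_eq_right (le_of_lt h)]

lemma G_hi {n k : ℕ} (w : Fin n → ℂ) (i : Fin n) (h : k ≤ (i : ℕ)) :
    hartogsG n k w i = P n (i : ℕ) w := by
  rw [G_eq, if_neg (by omega), max_eq_left h, one_mul]

lemma H_pos {n k : ℕ} {z : Fin n → ℂ} (hz : z ∈ hartogsTriangle n k) (hkn : k < n) :
    ∀ m (h : m < n), k ≤ m → 0 < ‖z ⟨m, h⟩‖ := by
  obtain ⟨h1, h2, _⟩ := hz
  intro m
  induction m with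
  | zero =>
    intro h hk0
    have hk : k = 0 := Nat.le_zero.mp hk0
    have h0 : (⟨k, hkn⟩ : Fin n) = ⟨0, h⟩ := Fin.ext hk
    calc (0:ℝ) ≤ _ := Real.sqrt_nonneg _
      _ < ‖z ⟨k, hkn⟩‖ := h1 hkn
      _ = _ := by rw [h0]
  | succ m ih =>
    intro h hkm
    by_cases hke : k = m + 1
    · have h0 : (⟨k, hkn⟩ : Fin n) = ⟨m + 1, h⟩ := Fin.ext hke
      calc (0:ℝ) ≤ _ := Real.sqrt_nonneg _
        _ < ‖z ⟨k, hkn⟩‖ := h1 hkn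
        _ = _ := by rw [h0]
    · have hkm' : k ≤ m := by omega
      have hmn : m < n := by omega
      exact lt_trans (ih hmn hkm') (h2 ⟨m, hmn⟩ hkm' h)

lemma H_ne_zero {n k : ℕ} {z : Fin n → ℂ} (hz : z ∈ hartogsTriangle n k) (hkn : k < n) :
    ∀ j : Fin n, k ≤ (j : ℕ) → z j ≠ 0 := by
  intro j hj
  have := H_pos hz hkn (j : ℕ) j.isLt hj
  simpa [norm_pos_iff] using this

lemma sum_scale {n k : ℕ} (z : Fin n → ℂ) (c : ℂ) :
    Real.sqrt (∑ i : Fin n, if (i : ℕ) < k then ‖z i * c‖ ^ 2 else 0)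
      = Real.sqrt (∑ i : Fin n, if (i : ℕ) < k then ‖z i‖ ^ 2 else 0) * ‖c‖ := by
  rw [← Real.sqrt_sq (norm_nonneg c), ← Real.sqrt_mul (by positivity)]
  congr 1
  rw [Finset.sum_mul]
  apply Finset.sum_congr rfl
  intro i _
  by_cases h : (i : ℕ) < k
  · rw [if_pos h, if_pos h, norm_mul, mul_pow]
  · rw [if_neg h, if_neg h, zero_mul]

/-- Telescoping: for k ≤ m < n, ∏_{s ≥ m} F(z)_s = z_m. -/
lemma tele {n k : ℕ} (hkn : k < n) (z : Fin n → ℂ)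
    (hz : ∀ j : Fin n, k ≤ (j : ℕ) → z j ≠ 0) :
    ∀ d m (hm : m + d + 1 = n) (_ : k ≤ m),
      P n m (hartogsF n k hkn z) = z ⟨m, by omega⟩ := by
  intro d
  induction d with
  | zero =>
    intro m hm hkm
    rw [P_split (by omega), P_top (by omega), mul_one,
      F_hi hkn z ⟨m, by omega⟩ hkm (by simp; omega)]
  | succ d ih =>
    intro m hm hkm
    have hm1 : m + 1 < n := by omega
    rw [P_split (by omega), F_mid hkn z ⟨m, by omega⟩ hkm (by simpa using hm1),
      ih (m + 1) (by omega) (by omega)]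
    exact div_mul_cancel₀ _ (hz ⟨m + 1, hm1⟩ (by simpa using le_trans hkm (Nat.le_succ m)))

lemma GF {n k : ℕ} (hkn : k < n) {z : Fin n → ℂ} (hz : z ∈ hartogsTriangle n k) :
    hartogsG n k (hartogsF n k hkn z) = z := by
  have hnz := H_ne_zero hz hkn
  funext i
  by_cases h : (i : ℕ) < k
  · rw [G_lo _ i h, tele hkn z hnz (n - 1 - k) k (by omega) le_rfl,
      F_lo hkn z i h]
    exact div_mul_cancel₀ _ (hnz ⟨k, hkn⟩ le_rfl)
  · rw [G_hi _ i (by omega),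
      tele hkn z hnz (n - 1 - (i : ℕ)) (i : ℕ) (by have := i.isLt; omega) (by omega)]

lemma FG {n k : ℕ} (hkn : k < n) {w : Fin n → ℂ} (hw : w ∈ ballTimesPuncturedDisks n k) :
    hartogsF n k hkn (hartogsG n k w) = w := by
  have hnz : ∀ j : Fin n, k ≤ (j : ℕ) → w j ≠ 0 := fun j hj => (hw.2 j hj).1
  funext i
  by_cases h : (i : ℕ) < k
  · rw [F_lo hkn _ i h, G_lo _ i h, G_hi _ ⟨k, hkn⟩ le_rfl]
    exact mul_div_cancel_right₀ _ (P_ne_zero hnz le_rfl)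
  · have hki : k ≤ (i : ℕ) := by omega
    by_cases h' : (i : ℕ) + 1 < n
    · rw [F_mid hkn _ i hki h', G_hi _ i hki, G_hi _ ⟨(i : ℕ) + 1, h'⟩ (by simp; omega),
        P_split i.isLt]
      exact mul_div_cancel_right₀ _ (P_ne_zero hnz (by omega))
    · rw [F_hi hkn _ i hki h', G_hi _ i hki, P_split i.isLt, P_top (by omega), mul_one]

lemma mapsToF {n k : ℕ} (hkn : k < n) {z : Fin n → ℂ} (hz : z ∈ hartogsTriangle n k) :
    hartogsF n k hkn z ∈ ballTimesPuncturedDisks n k := by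
  have hnz := H_ne_zero hz hkn
  obtain ⟨h1, h2, h3⟩ := hz
  have hzk : (0:ℝ) < ‖z ⟨k, hkn⟩‖ := by
    simpa [norm_pos_iff] using hnz ⟨k, hkn⟩ le_rfl
  constructor
  · have : ∀ i : Fin n,
        (if (i : ℕ) < k then ‖hartogsF n k hkn z i‖ ^ 2 else 0)
          = (if (i : ℕ) < k then ‖z i * (z ⟨k, hkn⟩)⁻¹‖ ^ 2 else 0) := by
      intro i
      by_cases h : (i : ℕ) < k
      · rw [if_pos h, if_pos h, F_lo hkn z i h, div_eq_mul_inv]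
      · rw [if_neg h, if_neg h]
    rw [Finset.sum_congr rfl (fun i _ => this i), sum_scale, norm_inv]
    rw [mul_inv_lt_iff₀ hzk, one_mul]
    exact h1 hkn
  · intro j hj
    by_cases h' : (j : ℕ) + 1 < n
    · have hnz1 : z ⟨(j : ℕ) + 1, h'⟩ ≠ 0 := hnz _ (by simp; omega)
      rw [F_mid hkn z j hj h']
      refine ⟨div_ne_zero (hnz j hj) hnz1, ?_⟩
      rw [norm_div, div_lt_one (by simpa [norm_pos_iff] using hnz1)]
      exact h2 j hj h'
    · have hjn : (j : ℕ) = n - 1 := by have := j.isLt; omega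
      rw [F_hi hkn z j hj h']
      refine ⟨hnz j hj, ?_⟩
      have : j = ⟨n - 1, Nat.sub_lt (by omega) one_pos⟩ := Fin.ext hjn
      rw [this]
      exact h3 (by omega)

lemma mapsToG {n k : ℕ} (hkn : k < n) {w : Fin n → ℂ}
    (hw : w ∈ ballTimesPuncturedDisks n k) :
    hartogsG n k w ∈ hartogsTriangle n k := by
  obtain ⟨h1, h2⟩ := hw
  have hnz : ∀ j : Fin n, k ≤ (j : ℕ) → w j ≠ 0 := fun j hj => (h2 j hj).1
  have hPpos : ∀ m, k ≤ m → (0:ℝ) < ‖P n m w‖ := fun m hm => by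
    simpa [norm_pos_iff] using P_ne_zero hnz hm
  refine ⟨?_, ?_, ?_⟩
  · intro hkn'
    have : ∀ i : Fin n,
        (if (i : ℕ) < k then ‖hartogsG n k w i‖ ^ 2 else 0)
          = (if (i : ℕ) < k then ‖w i * P n k w‖ ^ 2 else 0) := by
      intro i
      by_cases h : (i : ℕ) < k
      · rw [if_pos h, if_pos h, G_lo _ i h]
      · rw [if_neg h, if_neg h]
    rw [Finset.sum_congr rfl (fun i _ => this i), sum_scale,
      G_hi _ ⟨k, hkn'⟩ le_rfl]
    have := hPpos k le_rfl
    calc Real.sqrt _ * ‖P n k w‖ < 1 * ‖P n k w‖ := by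
          exact mul_lt_mul_of_pos_right h1 this
      _ = ‖P n k w‖ := one_mul _
  · intro j hj hj'
    rw [G_hi _ j hj, G_hi _ ⟨(j : ℕ) + 1, hj'⟩ (by simp; omega), P_split j.isLt]
    have hw1 : ‖w j‖ < 1 := (h2 j hj).2
    have hp : (0:ℝ) < ‖P n ((j : ℕ) + 1) w‖ := hPpos _ (by omega)
    calc ‖w j * P n ((j : ℕ) + 1) w‖ = ‖w j‖ * ‖P n ((j : ℕ) + 1) w‖ := norm_mul _ _
      _ < 1 * ‖P n ((j : ℕ) + 1) w‖ := mul_lt_mul_of_pos_right hw1 hp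
      _ = _ := one_mul _
  · intro hn
    have hkn1 : k ≤ n - 1 := by omega
    rw [G_hi _ ⟨n - 1, Nat.sub_lt hn one_pos⟩ (by simpa using hkn1)]
    have : P n (n - 1) w = w ⟨n - 1, Nat.sub_lt hn one_pos⟩ * P n (n - 1 + 1) w :=
      P_split (Nat.sub_lt hn one_pos) w
    rw [this, P_top (by omega) w, mul_one]
    exact (h2 ⟨n - 1, Nat.sub_lt hn one_pos⟩ (by simpa using hkn1)).2

lemma diff_finprod {E : Type*} [NormedAddCommGroup E] [NormedSpace ℂ E]
    {ι : Type*} [DecidableEq ι] {f : ι → E → ℂ} (u : Finset ι)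
    (hf : ∀ i, Differentiable ℂ (f i)) :
    Differentiable ℂ (fun x => ∏ i ∈ u, f i x) := by
  induction u using Finset.induction with
  | empty => simpa using differentiable_const (1 : ℂ)
  | insert a s h ih =>
    simp only [Finset.prod_insert h]
    exact (hf _).mul ih

end HartogsAux

open HartogsAux in
/-- F is a biholomorphism from H^n_k onto B^k × (D*)^{n-k}, with inverse G. -/
theorem hartogsF_biholomorphism (n k : ℕ) (hk : 1 ≤ k) (hkn : k < n) :
    Set.BijOn (hartogsF n k hkn) (hartogsTriangle n k) (ballTimesPuncturedDisks n k) ∧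
    DifferentiableOn ℂ (hartogsF n k hkn) (hartogsTriangle n k) ∧
    DifferentiableOn ℂ (hartogsG n k) (ballTimesPuncturedDisks n k) ∧
    (∀ z ∈ hartogsTriangle n k, hartogsG n k (hartogsF n k hkn z) = z) ∧
    (∀ w ∈ ballTimesPuncturedDisks n k, hartogsF n k hkn (hartogsG n k w) = w) := by
  have hproj : ∀ i : Fin n, Differentiable ℂ (fun z : Fin n → ℂ => z i) := fun i =>
    (ContinuousLinearMap.proj i : (Fin n → ℂ) →L[ℂ] ℂ).differentiable
  refine ⟨⟨fun z hz => mapsToF hkn hz, ?_, ?_⟩, ?_, ?_, fun z hz => GF hkn hz,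
    fun w hw => FG hkn hw⟩
  · -- InjOn
    intro z1 h1 z2 h2 heq
    rw [← GF hkn h1, ← GF hkn h2, heq]
  · -- SurjOn
    intro w hw
    exact ⟨hartogsG n k w, mapsToG hkn hw, FG hkn hw⟩
  · -- F differentiable
    rw [differentiableOn_pi]
    intro i
    by_cases h : (i : ℕ) < k
    · simp only [hartogsF, dif_pos h, div_eq_mul_inv]
      exact (hproj i).differentiableOn.mul
        (((hproj ⟨k, hkn⟩).differentiableOn).inv
          (fun z hz => H_ne_zero hz hkn ⟨k, hkn⟩ le_rfl))
    · by_cases h' : (i : ℕ) + 1 < n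
      · simp only [hartogsF, dif_neg h, dif_pos h', div_eq_mul_inv]
        exact (hproj i).differentiableOn.mul
          (((hproj ⟨(i : ℕ) + 1, h'⟩).differentiableOn).inv
            (fun z hz => H_ne_zero hz hkn ⟨(i : ℕ) + 1, h'⟩ (by simp; omega)))
      · simp only [hartogsF, dif_neg h, dif_neg h']
        exact (hproj i).differentiableOn
  · -- G differentiable (everywhere)
    apply Differentiable.differentiableOn
    rw [differentiable_pi]
    intro i
    apply Differentiable.mul
    · by_cases h : (i : ℕ) < k
      · simpa only [if_pos h] using hproj i
      · simpa only [if_neg h] using differentiable_const (1 : ℂ)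
    · apply diff_finprod
      intro s
      by_cases h : max (i : ℕ) k ≤ (s : ℕ)
      · simpa only [if_pos h] using hproj s
      · simpa only [if_neg h] using differentiable_const (1 : ℂ)
end

section
/- Define a_j = j^{−j} for j ≥ 1 and, for n ≥ 2, g(r) = r^{1/j − (n+1)} for r ∈ (a_{j+1}, a_j]. Then the sum Σ_{j=1}^∞ j·(a_j^{2n/(j(n+1))} − a_{j+1}^{2n/(j(n+1))}) converges (in fact it is bounded by a constant times Σ j^{−1−1/(2(n+1))}). -/
set_option maxHeartbeats 1000000 in
/-- With a_j = j^{-j} and n ≥ 2, the series Σ_j j·(a_j^{2n/(j(n+1))} − a_{j+1}^{2n/(j(n+1))})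
converges. -/
theorem hartogs_series_converges (n : ℕ) (hn : 2 ≤ n) :
    Summable (fun j : ℕ =>
      (j : ℝ) *
        (((j : ℝ) ^ (-(j : ℝ))) ^ (2 * (n : ℝ) / ((j : ℝ) * ((n : ℝ) + 1))) -
          (((j : ℝ) + 1) ^ (-((j : ℝ) + 1))) ^ (2 * (n : ℝ) / ((j : ℝ) * ((n : ℝ) + 1))))) := by
  have hN2 : (2:ℝ) ≤ (n:ℝ) := by exact_mod_cast hn
  set N : ℝ := (n:ℝ) with hNdef
  have hNpos : 0 < N + 1 := by linarith
  set α : ℝ := 2 * N / (N + 1) with hαdef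
  have hα0 : 0 < α := by positivity
  have hα1 : 4/3 ≤ α := by
    rw [hαdef, le_div_iff₀ hNpos]; nlinarith
  have hα2 : α ≤ 2 := by
    rw [hαdef, div_le_iff₀ hNpos]; nlinarith
  have hmaj : Summable (fun j : ℕ => 12 * (j:ℝ) ^ (-(7/6) : ℝ)) :=
    (Real.summable_nat_rpow.mpr (by norm_num)).mul_left 12
  apply Summable.of_nonneg_of_le _ _ hmaj
  · -- nonnegativity
    intro j
    rcases eq_or_ne j 0 with rfl | hj
    · simp
    have hj1 : (1:ℝ) ≤ (j:ℝ) := by exact_mod_cast Nat.one_le_iff_ne_zero.mpr hj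
    have hjpos : (0:ℝ) < (j:ℝ) := by linarith
    apply mul_nonneg (Nat.cast_nonneg j)
    rw [sub_nonneg]
    apply Real.rpow_le_rpow (by positivity) _ (by positivity)
    calc ((j:ℝ)+1) ^ (-((j:ℝ)+1)) ≤ ((j:ℝ)+1) ^ (-(j:ℝ)) :=
          Real.rpow_le_rpow_of_exponent_le (by linarith) (by linarith)
      _ ≤ (j:ℝ) ^ (-(j:ℝ)) :=
          Real.rpow_le_rpow_of_nonpos hjpos (by linarith) (by linarith)
  · -- upper bound by 12 j^{-7/6}
    intro j
    rcases eq_or_ne j 0 with rfl | hj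
    · simp
    have hj1 : (1:ℝ) ≤ (j:ℝ) := by exact_mod_cast Nat.one_le_iff_ne_zero.mpr hj
    have hjpos : (0:ℝ) < (j:ℝ) := by linarith
    set J : ℝ := (j:ℝ) with hJdef
    have hJ1pos : (0:ℝ) < J + 1 := by linarith
    have hA : (J ^ (-J)) ^ (2 * N / (J * (N + 1))) = J ^ (-α) := by
      rw [← Real.rpow_mul hjpos.le]
      congr 1
      rw [hαdef]
      field_simp
    have hB : ((J+1) ^ (-(J+1))) ^ (2 * N / (J * (N + 1))) = (J+1) ^ (-(α + α/J)) := by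
      rw [← Real.rpow_mul hJ1pos.le]
      congr 1
      rw [hαdef]
      field_simp
    rw [hA, hB]
    set t : ℝ := (α + α/J) * Real.log (J+1) - α * Real.log J with htdef
    have hlogJ : 0 ≤ Real.log J := Real.log_nonneg hj1
    have hlogJ1 : 0 ≤ Real.log (J+1) := Real.log_nonneg (by linarith)
    have hloggrow : Real.log J ≤ Real.log (J+1) := Real.log_le_log hjpos (by linarith)
    have hαJ : 0 ≤ α / J := by positivity
    have ht0 : 0 ≤ t := by
      rw [htdef]
      nlinarith
    -- step 1: difference ≤ J^{-α} * t
    have key : J ^ (-α) - (J+1) ^ (-(α + α/J)) ≤ J ^ (-α) * t := by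
      have e1 : (J+1) ^ (-(α+α/J)) = Real.exp (-α * Real.log J) * Real.exp (-t) := by
        rw [Real.rpow_def_of_pos hJ1pos, ← Real.exp_add]
        congr 1
        rw [htdef]; ring
      have e2 : J ^ (-α) = Real.exp (-α * Real.log J) := by
        rw [Real.rpow_def_of_pos hjpos]; ring_nf
      rw [e1, e2]
      have h1 : 1 - Real.exp (-t) ≤ t := by linarith [Real.add_one_le_exp (-t)]
      nlinarith [Real.exp_pos (-α * Real.log J), mul_le_mul_of_nonneg_left h1 (Real.exp_pos (-α * Real.log J)).le]
    -- step 2: t ≤ (α/J) * (1 + log (J+1))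
    have hlogdiff : Real.log (J+1) - Real.log J ≤ 1 / J := by
      have h := Real.log_le_sub_one_of_pos (show 0 < (J+1)/J by positivity)
      rw [Real.log_div (by linarith) (ne_of_gt hjpos)] at h
      have : (J+1)/J - 1 = 1/J := by field_simp; ring
      linarith [this ▸ h]
    have ht1 : t ≤ (α / J) * (1 + Real.log (J+1)) := by
      rw [htdef]
      have h2 : α * (Real.log (J+1) - Real.log J) ≤ α * (1/J) :=
        mul_le_mul_of_nonneg_left hlogdiff hα0.le
      have : α * (1/J) = α / J := by ring
      nlinarith
    -- step 3: 1 + log(J+1) ≤ 6 J^{1/6}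
    have hr6pos : (0:ℝ) < J ^ ((1:ℝ)/6) := Real.rpow_pos_of_pos hjpos _
    have hlog6 : 1 + Real.log (J+1) ≤ 6 * J ^ ((1:ℝ)/6) := by
      have h1 : Real.log (J+1) ≤ Real.log (2*J) := Real.log_le_log (by linarith) (by linarith)
      have h2 : Real.log (2*J) = Real.log 2 + Real.log J :=
        Real.log_mul two_ne_zero (ne_of_gt hjpos)
      have h3 : Real.log (J ^ ((1:ℝ)/6)) = (1/6) * Real.log J := Real.log_rpow hjpos _
      have h4 : Real.log (J ^ ((1:ℝ)/6)) ≤ J ^ ((1:ℝ)/6) - 1 :=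
        Real.log_le_sub_one_of_pos hr6pos
      have h5 : Real.log 2 ≤ 1 := by
        have := Real.log_le_sub_one_of_pos (show (0:ℝ) < 2 by norm_num)
        linarith
      nlinarith
    -- combine
    have hJα : J ^ (-α) ≤ J ^ (-(4/3) : ℝ) :=
      Real.rpow_le_rpow_of_exponent_le hj1 (by linarith)
    have hrpos : (0:ℝ) < J ^ (-α) := Real.rpow_pos_of_pos hjpos _
    have hrpos2 : (0:ℝ) < J ^ (-(4/3) : ℝ) := Real.rpow_pos_of_pos hjpos _
    have step : J * (J ^ (-α) - (J+1) ^ (-(α + α/J))) ≤ α * (J ^ (-α) * (1 + Real.log (J+1))) := by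
      have c1 : J * (J ^ (-α) - (J+1) ^ (-(α + α/J))) ≤ J * (J ^ (-α) * t) :=
        mul_le_mul_of_nonneg_left key hjpos.le
      have c2 : J ^ (-α) * t ≤ J ^ (-α) * ((α / J) * (1 + Real.log (J+1))) :=
        mul_le_mul_of_nonneg_left ht1 hrpos.le
      have hJα' : J * (α / J) = α := by
        field_simp
      have c3 : J * (J ^ (-α) * ((α / J) * (1 + Real.log (J+1))))
          = α * (J ^ (-α) * (1 + Real.log (J+1))) := by
        calc J * (J ^ (-α) * ((α / J) * (1 + Real.log (J+1))))
            = (J * (α / J)) * (J ^ (-α) * (1 + Real.log (J+1))) := by ring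
          _ = α * (J ^ (-α) * (1 + Real.log (J+1))) := by rw [hJα']
      calc J * (J ^ (-α) - (J+1) ^ (-(α + α/J))) ≤ J * (J ^ (-α) * t) := c1
        _ ≤ J * (J ^ (-α) * ((α / J) * (1 + Real.log (J+1)))) :=
            mul_le_mul_of_nonneg_left c2 hjpos.le
        _ = α * (J ^ (-α) * (1 + Real.log (J+1))) := c3
    have final : α * (J ^ (-α) * (1 + Real.log (J+1))) ≤ 12 * J ^ (-(7/6) : ℝ) := by
      have d1 : J ^ (-α) * (1 + Real.log (J+1)) ≤ J ^ (-(4/3) : ℝ) * (6 * J ^ ((1:ℝ)/6)) := by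
        apply mul_le_mul hJα hlog6 (by linarith) hrpos2.le
      have d2 : J ^ (-(4/3) : ℝ) * J ^ ((1:ℝ)/6) = J ^ (-(7/6) : ℝ) := by
        rw [← Real.rpow_add hjpos]
        norm_num
      have d3 : α * (J ^ (-α) * (1 + Real.log (J+1)))
          ≤ 2 * (J ^ (-(4/3) : ℝ) * (6 * J ^ ((1:ℝ)/6))) := by
        apply mul_le_mul hα2 d1 _ (by norm_num)
        · positivity
      calc α * (J ^ (-α) * (1 + Real.log (J+1)))
          ≤ 2 * (J ^ (-(4/3) : ℝ) * (6 * J ^ ((1:ℝ)/6))) := d3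
        _ = 12 * (J ^ (-(4/3) : ℝ) * J ^ ((1:ℝ)/6)) := by ring
        _ = 12 * J ^ (-(7/6) : ℝ) := by rw [d2]
    linarith
end
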